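/- Let p(μ) = det A^μ where A^μ is the 5×5 matrix as above (entries A_{ij} above the diagonal, μ·A_{ij} below, zero diagonal). Then p is a polynomial in μ of degree at most 4, p(0) = 0, p(−1) = 0, and lim_{μ→0} p(μ)/μ = A₁₂·A₂₃·A₃₄·A₄₅·A₅₁. -/

import Mathlib

set_option maxHeartbeats 1000000


/-- p(μ) = det A^μ is a polynomial of degree ≤ 4 in μ with p(0) = 0, p(−1) = 0,
and lim_{μ→0} p(μ)/μ = A₁₂A₂₃A₃₄A₄₅A₅₁. -/
theorem stmt13 (A : Fin 5 → Fin 5 → ℝ) (hsym : ∀ i j, A j i = A i j)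
    (Amu : ℝ → Matrix (Fin 5) (Fin 5) ℝ)
    (hA : ∀ μ i j, Amu μ i j =
      if i < j then A i j else if i = j then 0 else μ * A i j)
    (p : ℝ → ℝ) (hp : ∀ μ, p μ = (Amu μ).det) :
    (∃ q : Polynomial ℝ, q.degree ≤ 4 ∧ ∀ μ, p μ = q.eval μ) ∧
    p 0 = 0 ∧ p (-1) = 0 ∧
    Filter.Tendsto (fun μ => p μ / μ) (nhdsWithin 0 {(0 : ℝ)}ᶜ)
      (nhds (A 0 1 * A 1 2 * A 2 3 * A 3 4 * A 4 0)) := by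
  set c1 : ℝ := A 0 1 * A 0 4 * A 1 2 * A 2 3 * A 3 4 with hc1
  set c2 : ℝ := (-A 0 1 * A 0 1 * A 2 3 * A 2 4 * A 3 4 - A 0 1 * A 0 2 * A 1 2 * A 3 4 * A 3 4 + A 0 1 * A 0 2 * A 1 3 * A 2 4 * A 3 4 + A 0 1 * A 0 2 * A 1 4 * A 2 3 * A 3 4 + A 0 1 * A 0 3 * A 1 2 * A 2 4 * A 3 4 - A 0 1 * A 0 3 * A 1 3 * A 2 4 * A 2 4 + A 0 1 * A 0 3 * A 1 4 * A 2 3 * A 2 4 + A 0 1 * A 0 4 * A 1 3 * A 2 3 * A 2 4 - A 0 1 * A 0 4 * A 1 4 * A 2 3 * A 2 3 - A 0 2 * A 0 2 * A 1 3 * A 1 4 * A 3 4 + A 0 2 * A 0 3 * A 1 2 * A 1 4 * A 3 4 + A 0 2 * A 0 3 * A 1 3 * A 1 4 * A 2 4 - A 0 2 * A 0 3 * A 1 4 * A 1 4 * A 2 3 + A 0 2 * A 0 4 * A 1 2 * A 1 3 * A 3 4 - A 0 2 * A 0 4 * A 1 3 * A 1 3 * A 2 4 + A 0 2 * A 0 4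 * A 1 3 * A 1 4 * A 2 3 - A 0 3 * A 0 3 * A 1 2 * A 1 4 * A 2 4 - A 0 3 * A 0 4 * A 1 2 * A 1 2 * A 3 4 + A 0 3 * A 0 4 * A 1 2 * A 1 3 * A 2 4 + A 0 3 * A 0 4 * A 1 2 * A 1 4 * A 2 3 - A 0 4 * A 0 4 * A 1 2 * A 1 3 * A 2 3) with hc2
  have h10 : A 1 0 = A 0 1 := hsym 0 1
  have h20 : A 2 0 = A 0 2 := hsym 0 2
  have h30 : A 3 0 = A 0 3 := hsym 0 3
  have h40 : A 4 0 = A 0 4 := hsym 0 4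
  have h21 : A 2 1 = A 1 2 := hsym 1 2
  have h31 : A 3 1 = A 1 3 := hsym 1 3
  have h41 : A 4 1 = A 1 4 := hsym 1 4
  have h32 : A 3 2 = A 2 3 := hsym 2 3
  have h42 : A 4 2 = A 2 4 := hsym 2 4
  have h43 : A 4 3 = A 3 4 := hsym 3 4
  have key : ∀ μ : ℝ, p μ = c1 * μ + c2 * μ ^ 2 + c2 * μ ^ 3 + c1 * μ ^ 4 := by
    intro μ
    have hM : Amu μ = !![0, A 0 1, A 0 2, A 0 3, A 0 4;
        μ * A 0 1, 0, A 1 2, A 1 3, A 1 4;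
        μ * A 0 2, μ * A 1 2, 0, A 2 3, A 2 4;
        μ * A 0 3, μ * A 1 3, μ * A 2 3, 0, A 3 4;
        μ * A 0 4, μ * A 1 4, μ * A 2 4, μ * A 3 4, 0] := by
      ext i j
      fin_cases i <;> fin_cases j <;>
        simp [hA, h10, h20, h30, h40, h21, h31, h41, h32, h42, h43]
    rw [hp, hM]
    simp [Matrix.det_succ_row_zero, Fin.sum_univ_succ, Fin.succAbove]
    ring
  refine ⟨⟨Polynomial.C c1 * Polynomial.X + Polynomial.C c2 * Polynomial.X ^ 2 +
      Polynomial.C c2 * Polynomial.X ^ 3 + Polynomial.C c1 * Polynomial.X ^ 4, ?_, ?_⟩, ?_, ?_, ?_⟩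
  · compute_degree
  · intro μ; rw [key μ]; simp
  · rw [key 0]; ring
  · rw [key (-1)]; ring
  · have h40' : A 0 1 * A 1 2 * A 2 3 * A 3 4 * A 4 0 = c1 := by rw [h40, hc1]; ring
    rw [h40']
    have hg : Filter.Tendsto (fun μ : ℝ => c1 + c2 * μ + c2 * μ ^ 2 + c1 * μ ^ 3)
        (nhdsWithin 0 {(0 : ℝ)}ᶜ) (nhds c1) := by
      have hc : Continuous (fun μ : ℝ => c1 + c2 * μ + c2 * μ ^ 2 + c1 * μ ^ 3) := by
        continuity
      have h := (hc.continuousAt (x := (0 : ℝ))).continuousWithinAt (s := {(0 : ℝ)}ᶜ)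
      simpa using h.tendsto
    refine hg.congr' ?_
    filter_upwards [self_mem_nhdsWithin] with μ hμ
    have hμ0 : μ ≠ 0 := hμ
    rw [key μ]
    field_simp
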